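/- Let X be a metric space equipped with a Borel measure μ (opens are measurable), let K ⊆ X be a measurable connected subset, let f : X → ℝ be a 1-Lipschitz function, and let A ∈ ℝ, C₀ > 0, C₅ > 0, r₀ > 0 be constants. Assume: (i) there exists a ∈ K with f(a) ≤ A; (ii) μ(K) ≤ C₀; and (iii) for every x ∈ K, μ(K ∩ B(x, r₀)) ≥ C₅·r₀², where B(x, r₀) is the open ball. Then for every y ∈ K, f(y) ≤ A + 2C₀/(C₅·r₀) + 2r₀. -/

import Mathlib

open MeasureTheory Metric

/-- Abstract `C⁰`-bound via the monotonicity argument: if `K` is a connected measurable set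
of measure at most `C₀`, the `1`-Lipschitz function `f` is `≤ A` somewhere on `K`, and every
ball of radius `r₀` centered on `K` captures measure at least `C₅ r₀²` from `K`, then
`f ≤ A + 2C₀/(C₅ r₀) + 2r₀` on all of `K`. -/
theorem c0_bound_of_monotonicity {X : Type*} [MetricSpace X] [MeasurableSpace X]
    [OpensMeasurableSpace X] (μ : Measure X)
    (K : Set X) (hKm : MeasurableSet K) (hKc : IsConnected K)
    (f : X → ℝ) (hf : LipschitzWith 1 f)
    (A C₀ C₅ r₀ : ℝ) (hC₀ : 0 < C₀) (hC₅ : 0 < C₅) (hr₀ : 0 < r₀)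
    (ha : ∃ a ∈ K, f a ≤ A)
    (hμK : μ K ≤ ENNReal.ofReal C₀)
    (hball : ∀ x ∈ K, ENNReal.ofReal (C₅ * r₀ ^ 2) ≤ μ (K ∩ ball x r₀)) :
    ∀ y ∈ K, f y ≤ A + 2 * C₀ / (C₅ * r₀) + 2 * r₀ := by
  intro y hy
  by_contra hcontra
  push_neg at hcontra
  obtain ⟨a, haK, hfa⟩ := ha
  have hden : (0:ℝ) < C₅ * r₀ ^ 2 := by positivity
  set t : ℝ := C₀ / (C₅ * r₀ ^ 2) with ht
  have ht0 : 0 ≤ t := by positivity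
  set N : ℕ := ⌊t⌋₊ + 1 with hN
  have hNgt : t < (N : ℝ) := by rw [hN]; push_cast; exact Nat.lt_floor_add_one t
  have hNle : (N : ℝ) ≤ t + 1 := by
    have := Nat.floor_le ht0
    rw [hN]; push_cast; linarith
  -- the target values
  have hiv : ∀ i : Fin N, ∃ x ∈ K, f x = A + 2 * r₀ * (i + 1) := by
    intro i
    have h1 : f a ≤ A + 2 * r₀ * (i + 1) := by
      have : (0:ℝ) ≤ 2 * r₀ * ((i:ℝ) + 1) := by positivity
      linarith
    have h2 : A + 2 * r₀ * (i + 1) ≤ f y := by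
      have hiN : (i : ℝ) + 1 ≤ N := by exact_mod_cast i.2
      have hNt : 2 * r₀ * (N : ℝ) ≤ 2 * r₀ * (t + 1) := by nlinarith
      have hteq : 2 * r₀ * t = 2 * C₀ / (C₅ * r₀) := by
        rw [ht]; field_simp
      nlinarith
    have := hKc.isPreconnected.intermediate_value haK hy
      (hf.continuous.continuousOn)
    obtain ⟨x, hxK, hxv⟩ := this ⟨h1, h2⟩
    exact ⟨x, hxK, hxv⟩
  choose x hxK hxv using hiv
  -- disjointness of the balls
  have hdisj : (↑(Finset.univ : Finset (Fin N)) : Set (Fin N)).PairwiseDisjoint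
      (fun i => K ∩ ball (x i) r₀) := by
    intro i _ j _ hij
    refine Set.disjoint_left.2 ?_
    rintro z ⟨-, hzi⟩ ⟨-, hzj⟩
    have hd : dist (x i) (x j) < 2 * r₀ := by
      calc dist (x i) (x j) ≤ dist (x i) z + dist z (x j) := dist_triangle _ _ _
        _ < r₀ + r₀ := by
            rw [mem_ball] at hzi hzj
            rw [dist_comm (x i) z]
            linarith
        _ = 2 * r₀ := by ring
    have hfd : |f (x i) - f (x j)| ≤ dist (x i) (x j) := by
      have := hf.dist_le_mul (x i) (x j)
      simpa [Real.dist_eq] using this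
    have hsep : 2 * r₀ ≤ |f (x i) - f (x j)| := by
      rw [hxv i, hxv j]
      have heq : (A + 2 * r₀ * ((i:ℝ) + 1)) - (A + 2 * r₀ * ((j:ℝ) + 1)) =
          2 * r₀ * ((i : ℝ) - j) := by ring
      rw [heq, abs_mul, abs_of_pos (by positivity : (0:ℝ) < 2 * r₀)]
      have hone : (1:ℝ) ≤ |(i : ℝ) - (j : ℝ)| := by
        have hij' : ((i : ℕ) : ℤ) ≠ ((j : ℕ) : ℤ) := by
          exact_mod_cast fun h => hij (Fin.ext h)
        have : (1:ℤ) ≤ |((i:ℕ):ℤ) - ((j:ℕ):ℤ)| :=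
          Int.one_le_abs (sub_ne_zero.2 hij')
        calc (1:ℝ) ≤ (|((i:ℕ):ℤ) - ((j:ℕ):ℤ)| : ℤ) := by exact_mod_cast this
          _ = |(i : ℝ) - (j : ℝ)| := by push_cast; simp
      nlinarith
    linarith
  -- measure count
  have hmeas : ∀ i ∈ (Finset.univ : Finset (Fin N)),
      MeasurableSet (K ∩ ball (x i) r₀) :=
    fun i _ => hKm.inter measurableSet_ball
  have hsum : ∑ i : Fin N, μ (K ∩ ball (x i) r₀) ≤ μ K := by
    rw [← measure_biUnion_finset hdisj hmeas]
    exact measure_mono (Set.iUnion₂_subset fun i _ => Set.inter_subset_left)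
  have hlow : (N : ENNReal) * ENNReal.ofReal (C₅ * r₀ ^ 2) ≤
      ∑ i : Fin N, μ (K ∩ ball (x i) r₀) := by
    calc (N : ENNReal) * ENNReal.ofReal (C₅ * r₀ ^ 2)
        = ∑ _i : Fin N, ENNReal.ofReal (C₅ * r₀ ^ 2) := by
          simp [Finset.sum_const, nsmul_eq_mul]
      _ ≤ ∑ i : Fin N, μ (K ∩ ball (x i) r₀) :=
          Finset.sum_le_sum fun i _ => hball (x i) (hxK i)
  have hfinal : ENNReal.ofReal C₀ < (N : ENNReal) * ENNReal.ofReal (C₅ * r₀ ^ 2) := by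
    rw [← ENNReal.ofReal_natCast, ← ENNReal.ofReal_mul (by positivity)]
    apply (ENNReal.ofReal_lt_ofReal_iff_of_nonneg hC₀.le).2
    have hc : C₀ = t * (C₅ * r₀ ^ 2) := by
      rw [ht]; field_simp
    rw [hc]
    exact mul_lt_mul_of_pos_right hNgt hden
  exact absurd (le_trans hlow (le_trans hsum hμK)) (not_le.2 hfinal)
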